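/- Let r ≥ 1, let p = (p_1,…,p_r) with each p_i > 0, and let Ω₁, Ω₂ : ℝ^r → ℝ be continuous functions that are homogeneous with respect to ζ_ε^p of degrees d₁ > 0 and d₂ > 0 respectively, with Ω₁ positive definite. Then the set S = {z ∈ ℝ^r : Ω₁(z) = 1} is nonempty and there exist z_min, z_max ∈ S such that for every z ∈ ℝ^r: Ω₂(z_min)·Ω₁(z)^{d₂/d₁} ≤ Ω₂(z) ≤ Ω₂(z_max)·Ω₁(z)^{d₂/d₁}. -/

import Mathlib

/-- Lemma 4.2 of Bhat–Bernstein: if `Ω₁, Ω₂` are continuous, homogeneous of degrees `d₁, d₂ > 0`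
with respect to the anisotropic dilation `ζ_ε^p`, and `Ω₁` is positive definite, then the unit
sphere `{Ω₁ = 1}` is nonempty and `Ω₂` is sandwiched between its min and max over that sphere,
scaled by `Ω₁^{d₂/d₁}`. -/
theorem stmt3 (r : ℕ) (hr : 1 ≤ r) (p : Fin r → ℝ) (hp : ∀ i, 0 < p i)
    (d₁ d₂ : ℝ) (hd₁ : 0 < d₁) (hd₂ : 0 < d₂)
    (Ω₁ Ω₂ : (Fin r → ℝ) → ℝ)
    (hc₁ : Continuous Ω₁) (hc₂ : Continuous Ω₂)
    (hhom₁ : ∀ (z : Fin r → ℝ) (ε : ℝ), 0 < ε →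
      Ω₁ (fun i => ε ^ p i * z i) = ε ^ d₁ * Ω₁ z)
    (hhom₂ : ∀ (z : Fin r → ℝ) (ε : ℝ), 0 < ε →
      Ω₂ (fun i => ε ^ p i * z i) = ε ^ d₂ * Ω₂ z)
    (hpd0 : Ω₁ 0 = 0) (hpd : ∀ z : Fin r → ℝ, z ≠ 0 → 0 < Ω₁ z) :
    ∃ zmin zmax : Fin r → ℝ, Ω₁ zmin = 1 ∧ Ω₁ zmax = 1 ∧
      ∀ z : Fin r → ℝ,
        Ω₂ zmin * Ω₁ z ^ (d₂ / d₁) ≤ Ω₂ z ∧ Ω₂ z ≤ Ω₂ zmax * Ω₁ z ^ (d₂ / d₁) := by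
  set q : ℝ := d₂ / d₁ with hqdef
  have hq0 : 0 < q := div_pos hd₂ hd₁
  -- Ω₂ 0 = 0
  have hΩ₂0 : Ω₂ 0 = 0 := by
    have h := hhom₂ 0 2 (by norm_num)
    simp only [Pi.zero_apply, mul_zero] at h
    have h0 : Ω₂ (fun _ : Fin r => (0:ℝ)) = Ω₂ 0 := rfl
    rw [h0] at h
    have h2 : (1:ℝ) < (2:ℝ) ^ d₂ := Real.one_lt_rpow_iff_of_pos (by norm_num) |>.mpr (Or.inl ⟨by norm_num, hd₂⟩)
    nlinarith [h, h2]
  set g : (Fin r → ℝ) → ℝ := fun w => Ω₂ w / Ω₁ w ^ q with hgdef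
  -- dilation invariance of g
  have gdil : ∀ z : Fin r → ℝ, z ≠ 0 → ∀ ε : ℝ, 0 < ε →
      g (fun i => ε ^ p i * z i) = g z := by
    intro z hz ε hε
    have h1 : 0 < Ω₁ z := hpd z hz
    have hεd : (0:ℝ) < ε ^ d₁ := Real.rpow_pos_of_pos hε d₁
    simp only [hgdef, hhom₁ z ε hε, hhom₂ z ε hε]
    rw [Real.mul_rpow hεd.le h1.le]
    have hpow : (ε ^ d₁) ^ q = ε ^ d₂ := by
      rw [← Real.rpow_mul hε.le]
      congr 1
      rw [hqdef]; field_simp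
    rw [hpow, mul_div_mul_left _ _ (ne_of_gt (Real.rpow_pos_of_pos hε d₂))]
  -- the euclidean (sup-norm) sphere
  set K : Set (Fin r → ℝ) := Metric.sphere 0 1 with hKdef
  have hKmem : ∀ w : Fin r → ℝ, w ∈ K ↔ ‖w‖ = 1 := fun w => mem_sphere_zero_iff_norm
  have hKne : K.Nonempty := by
    refine ⟨Pi.single ⟨0, hr⟩ (1:ℝ), ?_⟩
    rw [hKmem, Pi.norm_single]
    simp
  have hKc : IsCompact K := isCompact_sphere 0 1
  have hKz : ∀ w ∈ K, w ≠ 0 := by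
    intro w hw h0
    rw [hKmem] at hw
    rw [h0] at hw
    simp at hw
  have hgcont : ContinuousOn g K := by
    apply continuousOn_of_forall_continuousAt
    intro w hw
    have h1 : 0 < Ω₁ w := hpd w (hKz w hw)
    have hrp : ContinuousAt (fun w => Ω₁ w ^ q) w :=
      (Real.continuousAt_rpow_const (Ω₁ w) q (Or.inl (ne_of_gt h1))).comp hc₁.continuousAt
    exact hc₂.continuousAt.div hrp (ne_of_gt (Real.rpow_pos_of_pos h1 q))
  obtain ⟨wmin, hwminK, hmin⟩ := hKc.exists_isMinOn hKne hgcont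
  obtain ⟨wmax, hwmaxK, hmax⟩ := hKc.exists_isMaxOn hKne hgcont
  -- normalization: every nonzero z can be dilated onto K
  have exists_eps : ∀ z : Fin r → ℝ, z ≠ 0 → ∃ ε : ℝ, 0 < ε ∧
      ‖(fun i => ε ^ p i * z i : Fin r → ℝ)‖ = 1 := by
    intro z hz
    obtain ⟨i0, hi0⟩ := Function.ne_iff.mp hz
    simp only [Pi.zero_apply] at hi0
    have hc0 : (0:ℝ) < |z i0| := abs_pos.mpr hi0
    have hfin : (Finset.univ : Finset (Fin r)).Nonempty := ⟨i0, Finset.mem_univ _⟩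
    set pm : ℝ := Finset.univ.inf' hfin p with hpmdef
    have hpm0 : 0 < pm := (Finset.lt_inf'_iff hfin).mpr (fun i _ => hp i)
    have hpmle : ∀ i, pm ≤ p i := fun i => Finset.inf'_le p (Finset.mem_univ i)
    have hz1 : (0:ℝ) < ‖z‖ + 1 := by positivity
    set a : ℝ := min 1 ((‖z‖ + 1) ^ (-(pm⁻¹))) with hadef
    set b : ℝ := max 1 (|z i0|⁻¹ ^ pm⁻¹) with hbdef
    have ha0 : 0 < a := lt_min one_pos (Real.rpow_pos_of_pos hz1 _)
    have ha1 : a ≤ 1 := min_le_left _ _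
    have hb1 : (1:ℝ) ≤ b := le_max_left _ _
    have hab : a ≤ b := ha1.trans hb1
    have hcontF : Continuous (fun ε : ℝ => (fun i => ε ^ p i * z i : Fin r → ℝ)) := by
      refine continuous_pi fun i => ?_
      have : Continuous fun ε : ℝ => ε ^ p i :=
        continuous_iff_continuousAt.mpr fun x =>
          Real.continuousAt_rpow_const x (p i) (Or.inr (hp i).le)
      exact this.mul continuous_const
    set φ : ℝ → ℝ := fun ε => ‖(fun i => ε ^ p i * z i : Fin r → ℝ)‖ with hφdef
    have hφcont : Continuous φ := continuous_norm.comp hcontF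
    have hφa : φ a ≤ 1 := by
      rw [hφdef]
      rw [pi_norm_le_iff_of_nonneg zero_le_one]
      intro i
      have h1 : a ^ p i ≤ a ^ pm := Real.rpow_le_rpow_of_exponent_ge ha0 ha1 (hpmle i)
      have h2 : a ^ pm ≤ ((‖z‖ + 1) ^ (-(pm⁻¹))) ^ pm :=
        Real.rpow_le_rpow ha0.le (min_le_right _ _) hpm0.le
      have h3 : ((‖z‖ + 1) ^ (-(pm⁻¹))) ^ pm = (‖z‖ + 1)⁻¹ := by
        rw [← Real.rpow_mul hz1.le]
        rw [show -(pm⁻¹) * pm = -1 by field_simp]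
        exact Real.rpow_neg_one _
      have hzi : |z i| ≤ ‖z‖ := by
        have := norm_le_pi_norm z i
        simpa using this
      have hpos : (0:ℝ) ≤ a ^ p i := (Real.rpow_pos_of_pos ha0 _).le
      calc ‖a ^ p i * z i‖ = a ^ p i * |z i| := by
            rw [Real.norm_eq_abs, abs_mul, abs_of_nonneg hpos]
        _ ≤ (‖z‖ + 1)⁻¹ * ‖z‖ := by
            apply mul_le_mul (h1.trans (h2.trans_eq h3)) hzi (abs_nonneg _)
            positivity
        _ ≤ 1 := by
            rw [inv_mul_le_iff₀ hz1]
            linarith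
    have hφb : 1 ≤ φ b := by
      have hbp : b ^ pm ≤ b ^ p i0 := Real.rpow_le_rpow_of_exponent_le hb1 (hpmle i0)
      have h2 : |z i0|⁻¹ ^ pm⁻¹ ≤ b := le_max_right _ _
      have h3 : (|z i0|⁻¹ ^ pm⁻¹) ^ pm ≤ b ^ pm :=
        Real.rpow_le_rpow (Real.rpow_nonneg (by positivity) _) h2 hpm0.le
      have h4 : (|z i0|⁻¹ ^ pm⁻¹) ^ pm = |z i0|⁻¹ := by
        rw [← Real.rpow_mul (by positivity)]
        rw [show pm⁻¹ * pm = 1 by field_simp]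
        exact Real.rpow_one _
      have key : 1 ≤ b ^ p i0 * |z i0| := by
        have : |z i0|⁻¹ ≤ b ^ p i0 := by
          rw [← h4]; exact h3.trans hbp
        calc (1:ℝ) = |z i0|⁻¹ * |z i0| := (inv_mul_cancel₀ (ne_of_gt hc0)).symm
          _ ≤ b ^ p i0 * |z i0| := by
            apply mul_le_mul_of_nonneg_right this (abs_nonneg _)
      calc (1:ℝ) ≤ b ^ p i0 * |z i0| := key
        _ = ‖b ^ p i0 * z i0‖ := by
            rw [Real.norm_eq_abs, abs_mul,
              abs_of_nonneg (Real.rpow_pos_of_pos (lt_of_lt_of_le one_pos hb1) _).le]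
        _ ≤ φ b := norm_le_pi_norm (fun i => b ^ p i * z i : Fin r → ℝ) i0
    have := intermediate_value_Icc hab hφcont.continuousOn
    obtain ⟨ε, hεmem, hεeq⟩ := this ⟨hφa, hφb⟩
    exact ⟨ε, lt_of_lt_of_le ha0 hεmem.1, hεeq⟩
  -- g is bounded by its extrema on K, everywhere off 0
  have gbound : ∀ z : Fin r → ℝ, z ≠ 0 → g wmin ≤ g z ∧ g z ≤ g wmax := by
    intro z hz
    obtain ⟨ε, hε, hεK⟩ := exists_eps z hz
    have hwK : (fun i => ε ^ p i * z i : Fin r → ℝ) ∈ K := (hKmem _).mpr hεK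
    have hgz : g (fun i => ε ^ p i * z i) = g z := gdil z hz ε hε
    exact ⟨hgz ▸ hmin hwK, hgz ▸ hmax hwK⟩
  -- normalized extremizers
  have hmkpt : ∀ w : Fin r → ℝ, w ∈ K →
      ∃ zw : Fin r → ℝ, Ω₁ zw = 1 ∧ Ω₂ zw = g w := by
    intro w hw
    have h1 : 0 < Ω₁ w := hpd w (hKz w hw)
    set ε : ℝ := (Ω₁ w) ^ (-(d₁⁻¹)) with hεdef
    have hε : 0 < ε := Real.rpow_pos_of_pos h1 _
    refine ⟨fun i => ε ^ p i * w i, ?_, ?_⟩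
    · rw [hhom₁ w ε hε, hεdef, ← Real.rpow_mul h1.le,
        show -d₁⁻¹ * d₁ = -1 by field_simp, Real.rpow_neg_one,
        inv_mul_cancel₀ (ne_of_gt h1)]
    · rw [hhom₂ w ε hε, hεdef, ← Real.rpow_mul h1.le,
        show -d₁⁻¹ * d₂ = -q by rw [hqdef]; ring, Real.rpow_neg h1.le, hgdef,
        inv_mul_eq_div]
  obtain ⟨zmin, hz1min, hz2min⟩ := hmkpt wmin hwminK
  obtain ⟨zmax, hz1max, hz2max⟩ := hmkpt wmax hwmaxK
  refine ⟨zmin, zmax, hz1min, hz1max, fun z => ?_⟩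
  by_cases hz : z = 0
  · subst hz
    rw [hpd0, Real.zero_rpow (ne_of_gt hq0), hΩ₂0, mul_zero]
    simp
  · have h1 : 0 < Ω₁ z := hpd z hz
    have h1q : 0 < Ω₁ z ^ q := Real.rpow_pos_of_pos h1 q
    obtain ⟨hlo, hhi⟩ := gbound z hz
    constructor
    · rw [hz2min]
      calc g wmin * Ω₁ z ^ q ≤ g z * Ω₁ z ^ q := mul_le_mul_of_nonneg_right hlo h1q.le
        _ = Ω₂ z := by rw [hgdef]; field_simp
    · rw [hz2max]
      calc Ω₂ z = g z * Ω₁ z ^ q := by rw [hgdef]; field_simp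
        _ ≤ g wmax * Ω₁ z ^ q := mul_le_mul_of_nonneg_right hhi h1q.le
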